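/- Let W be a d×n complex matrix, G = W*W, and W† the Moore–Penrose pseudoinverse of W. If F_0,...,F_{n−1} are positive semidefinite n×n matrices with Σ_i F_i = G, then the matrices M_i := (W†)* F_i W† + (1/n)(I − W W†) are positive semidefinite d×d matrices satisfying Σ_i M_i = I_d, and ⟨ψ_i|M_i|ψ_i⟩ = ⟨i|F_i|i⟩ where ψ_i is the i-th column of W. -/

import Mathlib

open Matrix BigOperators Finset ComplexOrder

/-- Circulant matrix: entries depend only on `(j - i) mod n`. -/
def IsCirc {n : ℕ} (G : Matrix (Fin n) (Fin n) ℂ) : Prop :=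
  ∃ g : Fin n → ℂ, ∀ i j, G i j = g (j - i)

/-- The cyclic shift permutation matrix `P` with `P i j = 1` iff `j = i + 1 (mod n)`. -/
def cyclicShift (n : ℕ) [NeZero n] : Matrix (Fin n) (Fin n) ℂ :=
  Matrix.of fun i j => if j = i + 1 then 1 else 0

/-- `k`-incoherent PSD matrix. -/
def KIncoherent {n : ℕ} (k : ℕ) (X : Matrix (Fin n) (Fin n) ℂ) : Prop :=
  ∃ (m : ℕ) (c : Fin m → ℝ) (ψ : Fin m → (Fin n → ℂ)),
    (∀ j, 0 ≤ c j) ∧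
    (∀ j, (Finset.univ.filter fun i => ψ j i ≠ 0).card ≤ k) ∧
    X = ∑ j, (c j : ℂ) • Matrix.vecMulVec (ψ j) (star (ψ j))

/-- `(n-1)`-locally PSD: every principal submatrix obtained by deleting one row and the
corresponding column is positive semidefinite. -/
def LocallyPSD {n : ℕ} (Y : Matrix (Fin n) (Fin n) ℂ) : Prop :=
  ∀ i : Fin n,
    Matrix.PosSemidef (Y.submatrix (fun k : {j : Fin n // j ≠ i} => (k : Fin n))
      (fun k : {j : Fin n // j ≠ i} => (k : Fin n)))

/-- The (unitary) discrete Fourier transform matrix. -/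
noncomputable def dftMatrix (n : ℕ) : Matrix (Fin n) (Fin n) ℂ :=
  Matrix.of fun j k =>
    Complex.exp (2 * Real.pi * Complex.I * (j.val * k.val) / n) / Real.sqrt n

theorem stmt9 {d n : ℕ} [NeZero n] (W : Matrix (Fin d) (Fin n) ℂ)
    (Wp : Matrix (Fin n) (Fin d) ℂ)
    (h1 : W * Wp * W = W) (h2 : Wp * W * Wp = Wp)
    (h3 : (W * Wp)ᴴ = W * Wp) (h4 : (Wp * W)ᴴ = Wp * W)
    (F : Fin n → Matrix (Fin n) (Fin n) ℂ) (hF : ∀ i, (F i).PosSemidef)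
    (hsum : ∑ i, F i = Wᴴ * W) :
    (∀ i, (Wpᴴ * F i * Wp + (n : ℂ)⁻¹ • (1 - W * Wp)).PosSemidef) ∧
    (∑ i, (Wpᴴ * F i * Wp + (n : ℂ)⁻¹ • (1 - W * Wp)) = 1) ∧
    (∀ i, dotProduct (star fun k => W k i)
        ((Wpᴴ * F i * Wp + (n : ℂ)⁻¹ • (1 - W * Wp)) *ᵥ fun k => W k i) = F i i i) := by
  have hPidem : (W * Wp) * (W * Wp) = W * Wp := by
    rw [← Matrix.mul_assoc, h1]
  have hninv : (0 : ℂ) ≤ (n : ℂ)⁻¹ := by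
    rw [← Complex.ofReal_natCast, ← Complex.ofReal_inv]
    exact Complex.zero_le_real.mpr (by positivity)
  have h1P : (1 - W * Wp).PosSemidef := by
    have he : (1 - W * Wp) = (1 - W * Wp)ᴴ * (1 - W * Wp) := by
      rw [conjTranspose_sub, conjTranspose_one, h3, Matrix.sub_mul, Matrix.mul_sub,
        Matrix.mul_sub, hPidem]
      simp
    rw [he]; exact posSemidef_conjTranspose_mul_self _
  have hcPSD : ((n : ℂ)⁻¹ • (1 - W * Wp)).PosSemidef := by
    refine posSemidef_iff_dotProduct_mulVec.mpr ⟨?_, ?_⟩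
    · unfold Matrix.IsHermitian
      rw [conjTranspose_smul, h1P.isHermitian.eq]
      congr 1
      simp [star_inv₀]
    · intro x
      rw [smul_mulVec, dotProduct_smul, smul_eq_mul]
      exact mul_nonneg hninv (h1P.dotProduct_mulVec_nonneg x)
  have hpsd : ∀ i, (Wpᴴ * F i * Wp + (n : ℂ)⁻¹ • (1 - W * Wp)).PosSemidef := fun i =>
    ((hF i).conjTranspose_mul_mul_same Wp).add hcPSD
  refine ⟨hpsd, ?_, ?_⟩
  · rw [Finset.sum_add_distrib, Finset.sum_const, Finset.card_univ, Fintype.card_fin]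
    have hWF : ∑ i, Wpᴴ * F i * Wp = Wpᴴ * (∑ i, F i) * Wp := by
      rw [Matrix.mul_sum, Matrix.sum_mul]
    have hPP : Wpᴴ * (Wᴴ * W) * Wp = W * Wp := by
      have hc : Wpᴴ * Wᴴ = W * Wp := by rw [← conjTranspose_mul, h3]
      calc Wpᴴ * (Wᴴ * W) * Wp = (Wpᴴ * Wᴴ) * (W * Wp) := by
            rw [← Matrix.mul_assoc, ← Matrix.mul_assoc, Matrix.mul_assoc _ W Wp]
        _ = W * Wp := by rw [hc, hPidem]
    rw [hWF, hsum, hPP, ← Nat.cast_smul_eq_nsmul ℂ, smul_smul,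
      mul_inv_cancel₀ (Nat.cast_ne_zero.mpr (NeZero.ne n)), one_smul]
    abel
  · intro i
    have hWR : W * (1 - Wp * W) = 0 := by
      rw [Matrix.mul_sub, Matrix.mul_one, ← Matrix.mul_assoc, h1, sub_self]
    have key : ∀ x : Fin n → ℂ, F i *ᵥ ((1 - Wp * W) *ᵥ x) = 0 := by
      intro x
      set y := (1 - Wp * W) *ᵥ x with hy
      have hWy : W *ᵥ y = 0 := by
        rw [hy, mulVec_mulVec, hWR, zero_mulVec]
      have hmv : (Wᴴ * W) *ᵥ y = ∑ j, F j *ᵥ y := by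
        rw [← hsum]
        ext k
        simp only [Matrix.mulVec, Matrix.sum_apply, dotProduct, Finset.sum_mul,
          Finset.sum_apply]
        rw [Finset.sum_comm]
      have hsum0 : ∑ j, star y ⬝ᵥ F j *ᵥ y = 0 := by
        have hd : ∑ j, star y ⬝ᵥ F j *ᵥ y = star y ⬝ᵥ (Wᴴ * W) *ᵥ y := by
          rw [hmv]
          simp only [dotProduct, Finset.sum_apply, Finset.mul_sum]
          rw [Finset.sum_comm]
        rw [hd, ← mulVec_mulVec, dotProduct_mulVec, ← star_mulVec, hWy]
        simp
      have hz := (Finset.sum_eq_zero_iff_of_nonneg (fun j _ => (hF j).dotProduct_mulVec_nonneg y)).mp hsum0 i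
        (Finset.mem_univ i)
      exact ((hF i).dotProduct_mulVec_zero_iff y).mp hz
    have hFR : F i * (1 - Wp * W) = 0 := by
      ext j k
      have := congrFun (key (Pi.single k 1)) j
      rw [mulVec_mulVec] at this
      simpa [mulVec_single] using this
    have hFQ : F i * (Wp * W) = F i := by
      rw [Matrix.mul_sub, Matrix.mul_one, sub_eq_zero] at hFR
      exact hFR.symm
    have hQF : (Wp * W) * F i = F i := by
      have := congrArg conjTranspose hFQ
      rwa [conjTranspose_mul, h4, (hF i).isHermitian.eq] at this
    have hQFQ : (Wp * W) * F i * (Wp * W) = F i := by rw [hQF, hFQ]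
    have hWM : Wᴴ * (Wpᴴ * F i * Wp + (n : ℂ)⁻¹ • (1 - W * Wp)) * W = F i := by
      have hW1P : (1 - W * Wp) * W = 0 := by
        rw [Matrix.sub_mul, Matrix.one_mul, h1, sub_self]
      have hc : Wᴴ * Wpᴴ = Wp * W := by rw [← conjTranspose_mul, h4]
      rw [Matrix.mul_add, Matrix.add_mul, Matrix.mul_smul, Matrix.smul_mul,
        Matrix.mul_assoc Wᴴ (1 - W * Wp) W, hW1P, Matrix.mul_zero, smul_zero, add_zero]
      calc Wᴴ * (Wpᴴ * F i * Wp) * W = (Wᴴ * Wpᴴ) * F i * (Wp * W) := by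
            rw [← Matrix.mul_assoc, ← Matrix.mul_assoc, Matrix.mul_assoc _ Wp W]
        _ = F i := by rw [hc, hQFQ]
    have hdot : (dotProduct (star fun k => W k i)
        ((Wpᴴ * F i * Wp + (n : ℂ)⁻¹ • (1 - W * Wp)) *ᵥ fun k => W k i))
        = ((Wᴴ * (Wpᴴ * F i * Wp + (n : ℂ)⁻¹ • (1 - W * Wp)) * W :
            Matrix (Fin n) (Fin n) ℂ)) i i := by
      simp only [Matrix.mul_apply, dotProduct, mulVec, Finset.mul_sum, Finset.sum_mul,
        conjTranspose_apply, Pi.star_apply]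
      rw [Finset.sum_comm]
      refine Finset.sum_congr rfl fun k _ => Finset.sum_congr rfl fun l _ => ?_
      ring
    rw [hdot, hWM]
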